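/- A Pell number P_n is of the form 2m² − 2 for some integer m if and only if P_n ∈ {0, 70}. -/

import Mathlib

/-- The Pell numbers: `P₀ = 0`, `P₁ = 1`, `P_{n+1} = 2·P_n + P_{n−1}`. -/
def pellP : ℕ → ℤ
  | 0 => 0
  | 1 => 1
  | n + 2 => 2 * pellP (n + 1) + pellP n

/-- half companion: 1,1,3,7,17,41,99,... -/
def pellR : ℕ → ℤ
  | 0 => 1
  | 1 => 1
  | n + 2 => 2 * pellR (n + 1) + pellR n

lemma pellP_two : pellP 2 = 2 := rfl
lemma pellP_six : pellP 6 = 70 := rfl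
lemma pellR_two : pellR 2 = 3 := rfl

lemma pellR_eq (n : ℕ) : pellR n = pellP (n+1) - pellP n := by
  induction n using Nat.twoStepInduction with
  | zero => rfl
  | one => rfl
  | more n ih1 ih2 =>
    have h3 : pellP (n+2+1) = 2 * pellP (n+1+1) + pellP (n+1) := rfl
    show 2 * pellR (n+1) + pellR n = pellP (n+2+1) - pellP (n+2)
    have h4 : pellP (n+2) = 2 * pellP (n+1) + pellP n := rfl
    rw [ih1, ih2, h3]; linarith [h4]

lemma pellP_succ (n : ℕ) : pellP (n+1) = pellP n + pellR n := by rw [pellR_eq]; ring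

lemma pellR_succ (n : ℕ) : pellR (n+1) = 2 * pellP n + pellR n := by
  rw [pellR_eq, pellR_eq]; show pellP (n+2) - _ = _
  show 2*pellP (n+1) + pellP n - pellP (n+1) = _; ring

lemma pell_add (a b : ℕ) : pellP (a+b) = pellP a * pellR b + pellR a * pellP b ∧
    pellR (a+b) = pellR a * pellR b + 2 * pellP a * pellP b := by
  induction b with
  | zero => show pellP a = _ ∧ pellR a = _; constructor <;> simp [pellP, pellR]
  | succ b ih =>
    obtain ⟨h1, h2⟩ := ih
    constructor
    · rw [show a + (b+1) = (a+b)+1 from rfl, pellP_succ, h1, h2, pellP_succ, pellR_succ]; ring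
    · rw [show a + (b+1) = (a+b)+1 from rfl, pellR_succ, h1, h2, pellP_succ, pellR_succ]; ring

lemma pell_norm (n : ℕ) : pellR n ^ 2 - 2 * pellP n ^ 2 = (-1) ^ n := by
  induction n with
  | zero => rfl
  | succ n ih => rw [pellP_succ, pellR_succ, pow_succ]; linear_combination (-1 : ℤ) * ih

lemma pell_pos (n : ℕ) : 0 ≤ pellP n ∧ 0 < pellR n := by
  induction n with
  | zero => exact ⟨le_refl 0, one_pos⟩
  | succ n ih => rw [pellP_succ, pellR_succ]; omega

lemma pellP_nonneg (n : ℕ) : 0 ≤ pellP n := (pell_pos n).1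
lemma pellR_pos (n : ℕ) : 0 < pellR n := (pell_pos n).2

lemma pellP_pos {n : ℕ} (h : 1 ≤ n) : 0 < pellP n := by
  obtain ⟨m, rfl⟩ := Nat.exists_eq_add_of_le h
  rw [show 1 + m = m + 1 by ring, pellP_succ]
  have := pellP_nonneg m; have := pellR_pos m; omega

lemma pellP_eq_zero {n : ℕ} (h : pellP n = 0) : n = 0 := by
  by_contra hn
  exact absurd h (ne_of_gt (pellP_pos (by omega)))

lemma pellR_ge_three {n : ℕ} (h : 2 ≤ n) : 3 ≤ pellR n := by
  induction n with
  | zero => omega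
  | succ n ih =>
    rcases Nat.lt_or_ge n 2 with h2 | h2
    · interval_cases n
      · omega
      · exact le_of_eq pellR_two.symm
    · rw [pellR_succ]
      have := pellP_pos (show 1 ≤ n by omega)
      have := ih h2
      omega

lemma pell_parity (n : ℕ) : pellP n % 2 = (n : ℤ) % 2 ∧ pellR n % 2 = 1 := by
  induction n with
  | zero => exact ⟨rfl, rfl⟩
  | succ n ih =>
    obtain ⟨h1, h2⟩ := ih
    rw [pellP_succ, pellR_succ]
    push_cast
    omega

lemma coprime_PR (n : ℕ) : IsCoprime (pellP n) (pellR n) := by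
  have h := pell_norm n
  rcases Nat.even_or_odd n with he | ho
  · rw [Even.neg_one_pow he] at h
    exact ⟨-2 * pellP n, pellR n, by ring_nf; linarith [h]⟩
  · rw [Odd.neg_one_pow ho] at h
    exact ⟨2 * pellP n, -pellR n, by ring_nf; linarith [h]⟩

lemma three_dvd_P : ∀ n : ℕ, ((3:ℤ) ∣ pellP n ↔ n % 4 = 0)
  | 0 => by rw [show pellP 0 = 0 from rfl]; omega
  | 1 => by rw [show pellP 1 = 1 from rfl]; omega
  | 2 => by rw [show pellP 2 = 2 from rfl]; omega
  | 3 => by rw [show pellP 3 = 5 from rfl]; omega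
  | (m+4) => by
    have h := (pell_add m 4).1
    rw [show pellR 4 = 17 from rfl, show pellP 4 = 12 from rfl] at h
    have ih := three_dvd_P m
    omega

lemma three_dvd_R : ∀ n : ℕ, ((3:ℤ) ∣ pellR n ↔ n % 4 = 2)
  | 0 => by rw [show pellR 0 = 1 from rfl]; omega
  | 1 => by rw [show pellR 1 = 1 from rfl]; omega
  | 2 => by rw [show pellR 2 = 3 from rfl]; omega
  | 3 => by rw [show pellR 3 = 7 from rfl]; omega
  | (m+4) => by
    have h := (pell_add m 4).2
    rw [show pellR 4 = 17 from rfl, show pellP 4 = 12 from rfl] at h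
    have ih := three_dvd_R m
    omega

lemma nine_dvd : ∀ n : ℕ, ((9:ℤ) ∣ pellP n → n % 12 = 0) ∧ ((9:ℤ) ∣ pellR n → n % 12 = 6)
  | 0 => by rw [show pellP 0 = 0 from rfl, show pellR 0 = 1 from rfl]; omega
  | 1 => by rw [show pellP 1 = 1 from rfl, show pellR 1 = 1 from rfl]; omega
  | 2 => by rw [show pellP 2 = 2 from rfl, show pellR 2 = 3 from rfl]; omega
  | 3 => by rw [show pellP 3 = 5 from rfl, show pellR 3 = 7 from rfl]; omega
  | 4 => by rw [show pellP 4 = 12 from rfl, show pellR 4 = 17 from rfl]; omega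
  | 5 => by rw [show pellP 5 = 29 from rfl, show pellR 5 = 41 from rfl]; omega
  | 6 => by rw [show pellP 6 = 70 from rfl, show pellR 6 = 99 from rfl]; omega
  | 7 => by rw [show pellP 7 = 169 from rfl, show pellR 7 = 239 from rfl]; omega
  | 8 => by rw [show pellP 8 = 408 from rfl, show pellR 8 = 577 from rfl]; omega
  | 9 => by rw [show pellP 9 = 985 from rfl, show pellR 9 = 1393 from rfl]; omega
  | 10 => by rw [show pellP 10 = 2378 from rfl, show pellR 10 = 3363 from rfl]; omega
  | 11 => by rw [show pellP 11 = 5741 from rfl, show pellR 11 = 8119 from rfl]; omega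
  | (m+12) => by
    have h1 := (pell_add m 12).1
    have h2 := (pell_add m 12).2
    rw [show pellR 12 = 19601 from rfl, show pellP 12 = 13860 from rfl] at h1 h2
    have ih := nine_dvd m
    omega


lemma sq_of_coprime' {a b c : ℤ} (h : IsCoprime a b) (heq : a * b = c ^ 2) (ha : 0 ≤ a) :
    ∃ d : ℤ, a = d ^ 2 := by
  obtain ⟨d, hd | hd⟩ := Int.sq_of_isCoprime h heq
  · exact ⟨d, hd⟩
  · refine ⟨d, ?_⟩
    have hd2 : d ^ 2 = 0 := by nlinarith [sq_nonneg d]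
    rw [hd, hd2]; omega

lemma pow4_of_coprime {a b c : ℤ} (h : IsCoprime a b) (heq : a * b = c ^ 4)
    (ha : 0 ≤ a) (hb : 0 ≤ b) : ∃ d : ℤ, a = d ^ 4 := by
  obtain ⟨s, hs⟩ := sq_of_coprime' (c := c^2) h (by rw [heq]; ring) ha
  obtain ⟨t, ht⟩ := sq_of_coprime' (c := c^2) h.symm (by rw [mul_comm, heq]; ring) hb
  have hst : (s * t) ^ 2 = (c ^ 2) ^ 2 := by
    have : a * b = (c^2)^2 := by rw [heq]; ring
    rw [← this, hs, ht]; ring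
  have h2 : s * t = c ^ 2 ∨ s * t = -(c ^ 2) := sq_eq_sq_iff_eq_or_eq_neg.mp hst
  have hcop : IsCoprime s t := by
    have h3 : IsCoprime (s ^ 2) (t ^ 2) := by rw [← hs, ← ht]; exact h
    rw [IsCoprime.pow_left_iff two_pos, IsCoprime.pow_right_iff two_pos] at h3
    exact h3
  rcases h2 with h2 | h2
  · obtain ⟨d, hd | hd⟩ := Int.sq_of_isCoprime hcop h2
    · exact ⟨d, by rw [hs, hd]; ring⟩
    · exact ⟨d, by rw [hs, hd]; ring⟩
  · obtain ⟨d, hd | hd⟩ := Int.sq_of_isCoprime hcop.neg_right (c := c)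
      (by rw [mul_neg, h2]; ring)
    · exact ⟨d, by rw [hs, hd]; ring⟩
    · exact ⟨d, by rw [hs, hd]; ring⟩

lemma natAbs_lt_of_sq_lt {a b : ℤ} (h : a^2 < b^2) : a.natAbs < b.natAbs := by
  by_contra hc
  push_neg at hc
  have h1 : (b.natAbs:ℤ) ≤ (a.natAbs:ℤ) := by exact_mod_cast hc
  have h2 : b^2 ≤ a^2 := by
    rw [← sq_abs a, ← sq_abs b, Int.abs_eq_natAbs, Int.abs_eq_natAbs]
    exact pow_le_pow_left₀ (by positivity) h1 2
  omega

lemma isCoprime_two_of_odd {a : ℤ} (h : a % 2 = 1) : IsCoprime a 2 :=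
  ⟨1, -(a/2), by omega⟩

lemma isCoprime_four_of_odd {a : ℤ} (h : a % 2 = 1) : IsCoprime a 4 :=
  ⟨a, -((a^2-1)/4), by
    have h2 : a^2 % 4 = 1 := by
      obtain ⟨c, rfl⟩ : ∃ c, a = 2*c+1 := ⟨a/2, by omega⟩
      have : (2*c+1)^2 = 4*(c^2+c)+1 := by ring
      omega
    have h3 : a * a = a^2 := by ring
    omega⟩

lemma flt4_aux : ∀ N : ℕ, ∀ x y z : ℤ, x.natAbs ≤ N → x ^ 4 - y ^ 4 = z ^ 2 → y ≠ 0 → z = 0 := by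
  intro N
  induction N with
  | zero =>
    intro x y z hx heq hy
    have hx0 : x = 0 := by omega
    subst hx0
    have hy4 : 0 < y ^ 4 := by positivity
    nlinarith [sq_nonneg z]
  | succ N ih =>
    intro x y z hx heq hy
    by_contra hz
    have hx0 : x ≠ 0 := by
      rintro rfl
      have hy4 : 0 < y ^ 4 := by positivity
      nlinarith [sq_nonneg z]
    -- gcd reduction
    by_cases hd : Int.gcd x y = 1
    case neg =>
      set d : ℕ := Int.gcd x y with hdd
      have hd0 : d ≠ 0 := fun h => hx0 (Int.natAbs_eq_zero.mp (Nat.eq_zero_of_gcd_eq_zero_left h))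
      obtain ⟨x₁, hx1⟩ : (d:ℤ) ∣ x := Int.gcd_dvd_left x y
      obtain ⟨y₁, hy1⟩ : (d:ℤ) ∣ y := Int.gcd_dvd_right x y
      have hd2 : 2 ≤ d := by omega
      have hzdvd : ((d:ℤ)^2)^2 ∣ z^2 := by
        refine ⟨x₁^4 - y₁^4, ?_⟩
        rw [← heq, hx1, hy1]; ring
      have hzd : (d:ℤ)^2 ∣ z := (Int.pow_dvd_pow_iff two_ne_zero).mp hzdvd
      obtain ⟨z₁, hz1⟩ := hzd
      have heq1 : x₁ ^ 4 - y₁ ^ 4 = z₁ ^ 2 := by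
        have hd4 : ((d:ℤ))^4 ≠ 0 := by positivity
        refine mul_left_cancel₀ hd4 ?_
        rw [hx1, hy1, hz1] at heq
        linear_combination heq
      have hy1' : y₁ ≠ 0 := by rintro rfl; simp at hy1; exact hy hy1
      have hx1' : x₁ ≠ 0 := by rintro rfl; simp at hx1; exact hx0 hx1
      have hlt : x₁.natAbs ≤ N := by
        have h1 : x.natAbs = d * x₁.natAbs := by rw [hx1, Int.natAbs_mul, Int.natAbs_natCast]
        have h2 : 1 ≤ x₁.natAbs := by
          rcases Nat.eq_zero_or_pos x₁.natAbs with h | h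
          · exact absurd (Int.natAbs_eq_zero.mp h) hx1'
          · exact h
        nlinarith
      have := ih x₁ y₁ z₁ hlt heq1 hy1'
      subst this
      exact hz (by rw [hz1]; ring)
    case pos =>
    have hcop : IsCoprime x y := Int.isCoprime_iff_gcd_eq_one.mpr hd
    -- x is odd
    have hxodd : x % 2 = 1 := by
      rcases Int.emod_two_eq x with h | h
      · exfalso
        obtain ⟨a, rfl⟩ : ∃ a, x = 2*a := ⟨x/2, by omega⟩
        have hyodd : y % 2 = 1 := by
          rcases Int.emod_two_eq y with h' | h'
          · exfalso
            have : IsUnit (2:ℤ) := hcop.isUnit_of_dvd' ⟨a, by ring⟩ ⟨y/2, by omega⟩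
            rw [Int.isUnit_iff] at this
            omega
          · exact h'
        obtain ⟨b, rfl⟩ : ∃ b, y = 2*b+1 := ⟨y/2, by omega⟩
        have h4 := congrArg (fun t : ℤ => (t : ZMod 4)) heq
        push_cast at h4
        have : ∀ A B Z : ZMod 4, (2*A)^4 - (2*B+1)^4 ≠ Z^2 := by decide
        exact this _ _ _ h4
      · exact h
    -- coprimality of y² and z
    have hc2 : IsCoprime (y^2) z := by
      have h1 : IsCoprime (y^4) (x^4) := (hcop.symm).pow
      have h2 : IsCoprime (y^4) (x^4 + y^4 * (-1)) := h1.add_mul_left_right (-1)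
      have h3 : x^4 + y^4 * (-1) = z^2 := by linarith
      rw [h3] at h2
      rw [show y^4 = (y^2)^2 by ring] at h2
      rw [IsCoprime.pow_left_iff two_pos, IsCoprime.pow_right_iff two_pos] at h2
      exact h2
    rcases Int.even_or_odd y with hyev | hyodd
    · -- y even : z odd, use triple (|z|, y², x²)
      obtain ⟨y₁, rfl⟩ : ∃ y₁, y = 2*y₁ := by
        obtain ⟨w, hw⟩ := hyev; exact ⟨w, by omega⟩
      have hzodd : z % 2 = 1 := by
        rcases Int.emod_two_eq z with h | h
        · exfalso
          obtain ⟨c, rfl⟩ : ∃ c, z = 2*c := ⟨z/2, by omega⟩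
          obtain ⟨e, rfl⟩ : ∃ e, x = 2*e+1 := ⟨x/2, by omega⟩
          have h4 := congrArg (fun t : ℤ => (t : ZMod 4)) heq
          push_cast at h4
          have : ∀ E Y C : ZMod 4, (2*E+1)^4 - (2*Y)^4 ≠ (2*C)^2 := by decide
          exact this _ _ _ h4
        · exact h
      set z₀ : ℤ := |z| with hz0def
      have hz0sq : z₀^2 = z^2 := sq_abs z
      have hz0pos : 0 < z₀ := abs_pos.mpr hz
      have hz0odd : z₀ % 2 = 1 := by rcases abs_choice z with h | h <;> omega
      have hPT : PythagoreanTriple z₀ ((2*y₁)^2) (x^2) := by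
        show z₀ * z₀ + (2*y₁)^2 * ((2*y₁)^2) = x^2 * (x^2)
        linear_combination hz0sq - heq
      have hgcdz : Int.gcd z₀ ((2*y₁)^2) = 1 := by
        rw [← Int.isCoprime_iff_gcd_eq_one]
        rcases abs_choice z with h | h
        · rw [hz0def, h]; exact hc2.symm
        · rw [hz0def, h]; exact hc2.symm.neg_left
      have hpos : 0 < x^2 := by positivity
      obtain ⟨m, k, hz0eq, hy2eq, hx2, hco, hpar, hm0⟩ :=
        PythagoreanTriple.coprime_classification' hPT hgcdz hz0odd hpos
      have hy1ne : y₁ ≠ 0 := by rintro rfl; exact hy (by ring)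
      have hy1sq : 0 < (2*y₁)^2 := by
        have h0 : 2*y₁ ≠ 0 := by omega
        exact lt_of_le_of_ne (sq_nonneg _) (Ne.symm (pow_ne_zero 2 h0))
      have hmpos : 0 < m := by
        rcases lt_or_eq_of_le hm0 with h | h
        · exact h
        · exfalso; rw [← h] at hz0eq; nlinarith [sq_nonneg k]
      have hkpos : 0 < k := by nlinarith
      have hcomk : IsCoprime m k := Int.isCoprime_iff_gcd_eq_one.mpr hco
      have key : ∃ a b : ℤ, x^2 = a^4 + 4*b^4 ∧ a % 2 = 1 ∧ b ≠ 0 ∧ IsCoprime a b := by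
        rcases hpar with ⟨hme, hko⟩ | ⟨hmo, hke⟩
        · -- m even, k odd
          obtain ⟨m₁, rfl⟩ : ∃ m₁, m = 2*m₁ := ⟨m/2, by omega⟩
          have hprod : k * m₁ = y₁^2 := by linarith [hy2eq]
          have hc6 : IsCoprime k m₁ :=
            (hcomk.symm).of_isCoprime_of_dvd_right ⟨2, by ring⟩
          obtain ⟨a, ha⟩ := sq_of_coprime' hc6 hprod hkpos.le
          obtain ⟨b, hb⟩ := sq_of_coprime' hc6.symm (by rw [mul_comm]; exact hprod)
            (by omega)
          refine ⟨a, b, by rw [hx2, ha, hb]; ring, ?_, ?_, ?_⟩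
          · rcases Int.emod_two_eq a with h | h
            · exfalso
              obtain ⟨c, rfl⟩ : ∃ c, a = 2*c := ⟨a/2, by omega⟩
              have : k = 4*c^2 := by rw [ha]; ring
              omega
            · exact h
          · rintro rfl; rw [show (0:ℤ)^2 = 0 by ring] at hb; omega
          · have h7 : IsCoprime (a^2) (b^2) := by rw [← ha, ← hb]; exact hc6
            rw [IsCoprime.pow_left_iff two_pos, IsCoprime.pow_right_iff two_pos] at h7
            exact h7
        · -- m odd, k even
          obtain ⟨k₁, rfl⟩ : ∃ k₁, k = 2*k₁ := ⟨k/2, by omega⟩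
          have hprod : m * k₁ = y₁^2 := by linarith [hy2eq]
          have hc6 : IsCoprime m k₁ :=
            hcomk.of_isCoprime_of_dvd_right ⟨2, by ring⟩
          obtain ⟨a, ha⟩ := sq_of_coprime' hc6 hprod hmpos.le
          obtain ⟨b, hb⟩ := sq_of_coprime' hc6.symm (by rw [mul_comm]; exact hprod)
            (by omega)
          refine ⟨a, b, by rw [hx2, ha, hb]; ring, ?_, ?_, ?_⟩
          · rcases Int.emod_two_eq a with h | h
            · exfalso
              obtain ⟨c, rfl⟩ : ∃ c, a = 2*c := ⟨a/2, by omega⟩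
              have : m = 4*c^2 := by rw [ha]; ring
              omega
            · exact h
          · rintro rfl; rw [show (0:ℤ)^2 = 0 by ring] at hb; omega
          · have h7 : IsCoprime (a^2) (b^2) := by rw [← ha, ← hb]; exact hc6
            rw [IsCoprime.pow_left_iff two_pos, IsCoprime.pow_right_iff two_pos] at h7
            exact h7
      clear hPT hgcdz hz0eq hy2eq hx2 hco hpar hm0 hcomk
      obtain ⟨a, b, hxab, haodd, hb0, hab⟩ := key
      set x₀ : ℤ := |x| with hx0def
      have hx0sq : x₀^2 = x^2 := sq_abs x
      have hx0pos : 0 < x₀ := abs_pos.mpr hx0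
      have hx0odd : x₀ % 2 = 1 := by rcases abs_choice x with h | h <;> omega
      have hb2 : 0 < b^2 := lt_of_le_of_ne (sq_nonneg b) (Ne.symm (pow_ne_zero 2 hb0))
      have hb4 : 0 < b^4 := by nlinarith
      have ha2odd : a^2 % 2 = 1 := by
        obtain ⟨c, rfl⟩ : ∃ c, a = 2*c+1 := ⟨a/2, by omega⟩
        have : (2*c+1)^2 = 4*(c^2+c)+1 := by ring
        omega
      have hxa : a^2 < x₀ := by
        by_contra hcc
        push_neg at hcc
        nlinarith [hx0sq, hxab]
      obtain ⟨u, hu⟩ : ∃ u, x₀ = a^2 + 2*u := ⟨(x₀ - a^2)/2, by omega⟩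
      have hupos : 0 < u := by omega
      set v : ℤ := u + a^2 with hv
      have hvpos : 0 < v := by have := sq_nonneg a; omega
      have h1 : (a^2+2*u)^2 = a^4+4*b^4 := by rw [← hu, hx0sq]; exact hxab
      have huv : u * v = b^4 := by
        have h8 : 4*(u*v) = 4*b^4 := by rw [hv]; linear_combination h1
        omega
      have hc5 : IsCoprime (a^2) x₀ := by
        have hc4 : IsCoprime (a^4) (4*b^4) :=
          ((isCoprime_four_of_odd haodd).mul_right hab.pow_right).pow_left
        have h9 := hc4.add_mul_left_right 1
        rw [mul_one] at h9
        have hx2' : x₀^2 = 4*b^4 + a^4 := by rw [hx0sq, hxab]; ring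
        rw [← hx2'] at h9
        rw [show a^4 = (a^2)^2 by ring] at h9
        rw [IsCoprime.pow_left_iff two_pos, IsCoprime.pow_right_iff two_pos] at h9
        exact h9
      have hcuv : IsCoprime u v := by
        obtain ⟨α, β, hab1⟩ := hc5
        rw [hu] at hab1
        exact ⟨β - α, α + β, by rw [hv]; linear_combination hab1⟩
      obtain ⟨s, hs⟩ := pow4_of_coprime hcuv huv hupos.le hvpos.le
      obtain ⟨t, ht⟩ := pow4_of_coprime hcuv.symm (by rw [mul_comm]; exact huv)
        hvpos.le hupos.le
      have ha2 : t^4 - s^4 = a^2 := by rw [← ht, ← hs, hv]; ring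
      have hs0 : s ≠ 0 := by rintro rfl; rw [show (0:ℤ)^4 = 0 by ring] at hs; omega
      have hlt : t.natAbs ≤ N := by
        have h10 : ((t.natAbs:ℤ))^4 = t^4 := by
          rw [← Int.abs_eq_natAbs, pow_abs, abs_of_nonneg (show (0:ℤ) ≤ t^4 by positivity)]
        have h6 : (t.natAbs:ℤ) ≤ t^4 := by
          rw [← h10]; exact_mod_cast Nat.le_self_pow (by norm_num) t.natAbs
        have h11 : t^4 < x₀ := by omega
        have h12 : ((x.natAbs:ℤ)) = x₀ := by rw [hx0def, Int.abs_eq_natAbs]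
        omega
      have := ih t s a hlt ha2 hs0
      omega
    · -- y odd : triple (y², z, x²)
      have hPT : PythagoreanTriple (y^2) z (x^2) := by
        show y^2 * (y^2) + z * z = x^2 * (x^2)
        linear_combination -heq
      have hgcd : Int.gcd (y^2) z = 1 := Int.isCoprime_iff_gcd_eq_one.mp hc2
      have hparity : (y^2) % 2 = 1 := by
        obtain ⟨b, rfl⟩ := hyodd
        have : (2*b+1)^2 = 4*(b^2+b)+1 := by ring
        omega
      have hpos : 0 < x^2 := by positivity
      obtain ⟨m, k, hy2, hz2, hx2, hco, hpar, hm⟩ :=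
        PythagoreanTriple.coprime_classification' hPT hgcd hparity hpos
      have hk0 : k ≠ 0 := by rintro rfl; rw [mul_zero] at hz2; exact hz hz2
      have heq' : m ^ 4 - k ^ 4 = (x*y) ^ 2 := by
        have : (x*y)^2 = x^2 * y^2 := by ring
        rw [this, hx2, hy2]; ring
      have hlt : m.natAbs ≤ N := by
        have hk2 : 0 < k^2 := lt_of_le_of_ne (sq_nonneg k) (Ne.symm (pow_ne_zero 2 hk0))
        have h1 : m^2 < x^2 := by linarith [hx2, hk2]
        have := natAbs_lt_of_sq_lt h1
        omega
      have := ih m k (x*y) hlt heq' hk0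
      exact (mul_ne_zero hx0 hy) this

lemma flt4m {x y z : ℤ} (h : x ^ 4 - y ^ 4 = z ^ 2) (hy : y ≠ 0) : z = 0 :=
  flt4_aux x.natAbs x y z le_rfl h hy

/-- `x⁴ = 2y² + 1` implies `y = 0`. -/
lemma quartic1 {x y : ℤ} (h : x ^ 4 = 2 * y ^ 2 + 1) : y = 0 := by
  by_contra hy
  have hx : x ≠ 0 := by rintro rfl; simp at h; omega
  obtain ⟨w, hw⟩ : ∃ w, x^4 + 1 = 2*w := ⟨(x^4+1)/2, by omega⟩
  have h2 : 4*(y^4 + x^4) = 4*(w^2) := by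
    linear_combination (-(x^4 - 1 + 2*y^2))*h + (x^4+1+2*w)*hw
  have h3 : y^4 + x^4 = w^2 := by omega
  exact not_fermat_42 hy hx h3

/-- `x⁴ + 1 = 2y²` implies `x² = 1`. -/
lemma quartic2 {x y : ℤ} (h : x ^ 4 + 1 = 2 * y ^ 2) : x ^ 2 = 1 := by
  have hx : x ≠ 0 := by rintro rfl; simp at h; omega
  obtain ⟨z, hzz⟩ : ∃ z, x^4 - 1 = 2*z := ⟨(x^4-1)/2, by omega⟩
  have h4 : 4*(y^4 - x^4) = 4*(z^2) := by
    linear_combination (-(x^4+1+2*y^2))*h + (x^4-1+2*z)*hzz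
  have h5 : y^4 - x^4 = z^2 := by omega
  have hz0 : z = 0 := flt4m h5 hx
  subst hz0
  have h6 : x^4 = 1 := by omega
  have hA0 : 0 ≤ x^2 := sq_nonneg x
  have h1 : x^2 ≤ 1 := by nlinarith [sq_nonneg (x^2 - 1)]
  nlinarith [mul_nonneg (sub_nonneg.mpr h1) hA0]

lemma coprime_consec (n : ℕ) : IsCoprime (pellP (n+1)) (pellP n) := by
  induction n with
  | zero => show IsCoprime 1 0; exact isCoprime_one_left
  | succ n ih =>
    have e2 : pellP (n+2) = pellP n + pellP (n+1) * 2 := by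
      show 2 * pellP (n+1) + pellP n = _; ring
    rw [e2]
    exact ih.symm.add_mul_left_left 2

lemma isCoprime_three {a : ℤ} (h : ¬ (3:ℤ) ∣ a) : IsCoprime 3 a := by
  rw [Int.isCoprime_iff_gcd_eq_one]
  have h1 : Int.gcd 3 a ∣ 3 := by
    have h2 := Int.gcd_dvd_left (a := (3:ℤ)) (b := a)
    exact_mod_cast h2
  rcases (Nat.dvd_prime Nat.prime_three).mp h1 with h2 | h2
  · exact h2
  · exfalso
    apply h
    have h3 := Int.gcd_dvd_right (a := (3:ℤ)) (b := a)
    rw [h2] at h3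
    exact_mod_cast h3

lemma isCoprime_of_pm_one {x y u v : ℤ} (h : u*x + v*y = 1 ∨ u*x + v*y = -1) :
    IsCoprime x y := by
  rcases h with h | h
  · exact ⟨u, v, h⟩
  · exact ⟨-u, -v, by linarith⟩

lemma pell_J (a b : ℕ) : pellP (a+b) * pellR a - pellR (a+b) * pellP a = (-1)^a * pellP b := by
  induction a with
  | zero =>
    rw [Nat.zero_add]
    show pellP b * 1 - pellR b * 0 = 1 * pellP b
    ring
  | succ a ih =>
    have h1 : a + 1 + b = (a+b) + 1 := by omega
    rw [h1, pellP_succ (a+b), pellR_succ (a+b), pellP_succ a, pellR_succ a, pow_succ]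
    linear_combination (-1 : ℤ) * ih

lemma pellR_eq_one {w : ℕ} (h : pellR w = 1) : w ≤ 1 := by
  by_contra hc
  have := pellR_ge_three (show 2 ≤ w by omega)
  omega

lemma sq_ne_two (m : ℤ) : m ^ 2 ≠ 2 := by
  intro h
  rcases Int.even_or_odd m with ⟨c, rfl⟩ | ⟨c, rfl⟩
  · have h2 : (c+c)^2 = 4*c^2 := by ring
    omega
  · have h2 : (2*c+1)^2 = 4*(c^2+c)+1 := by ring
    omega
/-- **Theorem.** A Pell number is of the form `2m² − 2` iff it is `0` or `70`. -/
theorem stmt18 (n : ℕ) :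
    (∃ m : ℤ, pellP n = 2 * m ^ 2 - 2) ↔ pellP n ∈ ({0, 70} : Set ℤ) := by
  constructor
  · rintro ⟨m, hm⟩
    simp only [Set.mem_insert_iff, Set.mem_singleton_iff]
    have hpar := (pell_parity n).1
    have hneven : n % 2 = 0 := by omega
    obtain ⟨t, rfl⟩ : ∃ t, n = 2*t := ⟨n/2, by omega⟩
    rcases Nat.eq_zero_or_pos t with rfl | ht
    · left; rfl
    obtain ⟨s, rfl⟩ : ∃ s, t = s+1 := ⟨t-1, by omega⟩
    have hmm : pellP ((s+2)+s) = 2*m^2 - 2 := by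
      rw [show (s+2)+s = 2*(s+1) by omega]; exact hm
    have hadd1 := (pell_add (s+2) s).1
    have hJ := pell_J s 2
    rw [pellP_two] at hJ
    rcases Nat.even_or_odd s with hse | hso
    · -- s even: pellP (s+2) * pellR s = m²
      have hsign : (-1:ℤ)^s = 1 := Even.neg_one_pow hse
      rw [hsign, one_mul] at hJ
      have hkey : pellP (s+2) * pellR s = m^2 := by omega
      rcases Nat.eq_zero_or_pos s with rfl | hs1
      · exfalso
        rw [show pellP (0+2) = 2 from rfl, show pellR 0 = 1 from rfl] at hkey
        exact sq_ne_two m (by omega)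
      have hs2 : 2 ≤ s := by
        obtain ⟨r, rfl⟩ := hse; omega
      rcases (show s % 4 = 0 ∨ s % 4 = 2 by obtain ⟨r, rfl⟩ := hse; omega) with hs4 | hs4
      · -- s ≡ 0 mod 4 : coprime case, kill with quartic1
        exfalso
        have h3R : ¬ (3:ℤ) ∣ pellR s := by rw [three_dvd_R s]; omega
        have hcop : IsCoprime (pellP (s+2)) (pellR s) := by
          have hrel : pellP (s+2) = 3*pellP s + 2*pellR s := by
            have e2 : pellP (s+2) = 2*pellP (s+1) + pellP s := rfl
            have e3 := pellP_succ s
            omega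
          rw [hrel, show 3*pellP s + 2*pellR s = 3*pellP s + pellR s * 2 by ring]
          exact ((isCoprime_three h3R).mul_left (coprime_PR s)).add_mul_left_left 2
        obtain ⟨b, hb⟩ := sq_of_coprime' hcop.symm (by rw [mul_comm]; exact hkey)
          (le_of_lt (pellR_pos s))
        have hnorm := pell_norm s
        rw [hsign] at hnorm
        have hq : b^4 = 2*pellP s^2 + 1 := by
          have h5 : (b^2)^2 = pellR s^2 := by rw [hb]
          have h6 : b^4 = (b^2)^2 := by ring
          linarith
        have := pellP_eq_zero (quartic1 hq)
        omega
      · -- s ≡ 2 mod 4 : the 3-divisible case, solution n = 6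
        have h3P : (3:ℤ) ∣ pellP (s+2) := (three_dvd_P (s+2)).mpr (by omega)
        have h3R : (3:ℤ) ∣ pellR s := (three_dvd_R s).mpr (by omega)
        obtain ⟨u, hu⟩ := h3P
        obtain ⟨v, hv⟩ := h3R
        have hrel : pellP (s+2) = 3*pellP s + 2*pellR s := by
          have e2 : pellP (s+2) = 2*pellP (s+1) + pellP s := rfl
          have e3 := pellP_succ s
          omega
        have h3m : (3:ℤ) ∣ m := by
          apply Int.prime_three.dvd_of_dvd_pow (n := 2)
          exact ⟨3*(u*v), by rw [← hkey, hu, hv]; ring⟩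
        obtain ⟨m₁, rfl⟩ := h3m
        have hkey1 : u * v = m₁^2 := by
          rw [hu, hv] at hkey
          have h9 : 9*(u*v) = 9*m₁^2 := by linear_combination hkey
          omega
        have hupos : 0 < u := by have := pellP_pos (show 1 ≤ s+2 by omega); omega
        have hvpos : 0 < v := by have := pellR_pos s; omega
        have hcopuv : IsCoprime u v := by
          rw [Int.isCoprime_iff_gcd_eq_one]
          by_contra hg
          have hg0 : Int.gcd u v ≠ 0 := by
            intro h0
            have h1 : u = 0 := Int.natAbs_eq_zero.mp (Nat.eq_zero_of_gcd_eq_zero_left h0)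
            omega
          obtain ⟨p, hp, hpd⟩ := Nat.exists_prime_and_dvd hg
          have hpu : (p:ℤ) ∣ u := (Int.natCast_dvd_natCast.mpr hpd).trans (Int.gcd_dvd_left u v)
          have hpv : (p:ℤ) ∣ v := (Int.natCast_dvd_natCast.mpr hpd).trans (Int.gcd_dvd_right u v)
          have hpP2 : (p:ℤ) ∣ pellP (s+2) := hu ▸ hpu.mul_left 3
          have hpR : (p:ℤ) ∣ pellR s := hv ▸ hpv.mul_left 3
          have hp3Ps : (p:ℤ) ∣ 3 * pellP s := by
            have he4 : (3:ℤ) * pellP s = pellP (s+2) - 2*pellR s := by rw [hrel]; ring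
            rw [he4]
            exact dvd_sub hpP2 (hpR.mul_left 2)
          have hpZ : Prime (p:ℤ) := Nat.prime_iff_prime_int.mp hp
          rcases hpZ.dvd_mul.mp hp3Ps with hp3 | hpPs
          · have hp3' : p = 3 := by
              have hd3 : p ∣ 3 := by exact_mod_cast hp3
              rcases (Nat.dvd_prime Nat.prime_three).mp hd3 with h | h
              · exact absurd h hp.ne_one
              · exact h
            subst hp3'
            have h9P : (9:ℤ) ∣ pellP (s+2) := by
              obtain ⟨u₁, hu1⟩ := hpu
              exact ⟨u₁, by rw [hu, hu1]; push_cast; ring⟩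
            have h9R : (9:ℤ) ∣ pellR s := by
              obtain ⟨v₁, hv1⟩ := hpv
              exact ⟨v₁, by rw [hv, hv1]; push_cast; ring⟩
            have hc12a := (nine_dvd (s+2)).1 h9P
            have hc12b := (nine_dvd s).2 h9R
            omega
          · have hun := (coprime_PR s).isUnit_of_dvd' hpPs hpR
            rw [Int.isUnit_iff] at hun
            have := hp.two_le
            omega
        obtain ⟨a', ha'⟩ := sq_of_coprime' hcopuv hkey1 hupos.le
        -- s+2 = 4w
        obtain ⟨w, hw⟩ : ∃ w, s+2 = 4*w := ⟨(s+2)/4, by omega⟩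
        have hw1 : 1 ≤ w := by omega
        have hd1 : pellP (4*w) = 2 * pellP (2*w) * pellR (2*w) := by
          have hdd := (pell_add (2*w) (2*w)).1
          rw [show 2*w + 2*w = 4*w by omega] at hdd
          rw [hdd]; ring
        have hd2 : pellP (2*w) = 2 * pellP w * pellR w := by
          have hdd := (pell_add w w).1
          rw [show w + w = 2*w by omega] at hdd
          rw [hdd]; ring
        have hP4 : pellP (s+2) = 4 * (pellP w * (pellR w * pellR (2*w))) := by
          rw [hw, hd1, hd2]; ring
        have haeven : a' % 2 = 0 := by
          rcases Int.emod_two_eq a' with h | h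
          · exact h
          · exfalso
            obtain ⟨c, rfl⟩ : ∃ c, a' = 2*c+1 := ⟨a'/2, by omega⟩
            have h8 : (2*c+1)^2 = 4*(c^2+c)+1 := by ring
            omega
        obtain ⟨a₁, rfl⟩ : ∃ a₁, a' = 2*a₁ := ⟨a'/2, by omega⟩
        have hprod3 : pellP w * (pellR w * pellR (2*w)) = 3 * a₁^2 := by
          have h8 : (2*a₁)^2 = 4*a₁^2 := by ring
          omega
        have hR2w := (pell_add w w).2
        rw [show w + w = 2*w by omega] at hR2w
        have hnw := pell_norm w
        have hc2 : IsCoprime (pellP w) (pellR (2*w)) := by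
          apply isCoprime_of_pm_one (u := -(4*pellP w)) (v := 1)
          have hval : (-(4*pellP w))*(pellP w) + 1*(pellR (2*w)) = (-1)^w := by
            rw [hR2w]; linear_combination hnw
          rcases Nat.even_or_odd w with h | h
          · left; rw [hval, Even.neg_one_pow h]
          · right; rw [hval, Odd.neg_one_pow h]
        have hc3 : IsCoprime (pellR w) (pellR (2*w)) := by
          apply isCoprime_of_pm_one (u := 2*pellR w) (v := -1)
          have hval : (2*pellR w)*(pellR w) + (-1)*(pellR (2*w)) = (-1)^w := by
            rw [hR2w]; linear_combination hnw
          rcases Nat.even_or_odd w with h | h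
          · left; rw [hval, Even.neg_one_pow h]
          · right; rw [hval, Odd.neg_one_pow h]
        rcases Nat.even_or_odd w with hwe | hwo
        · exfalso
          rcases (show w % 4 = 0 ∨ w % 4 = 2 by obtain ⟨r, rfl⟩ := hwe; omega) with hw4 | hw4
          · -- 3 ∣ P w ; get R w = square, contradiction via quartic1
            obtain ⟨p₁, hp1⟩ := (three_dvd_P w).mpr hw4
            have heq2 : p₁ * (pellR w * pellR (2*w)) = a₁^2 := by
              rw [hp1] at hprod3
              have h9 : 3*(p₁ * (pellR w * pellR (2*w))) = 3*a₁^2 := by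
                linear_combination hprod3
              omega
            have hcp : IsCoprime p₁ (pellR w * pellR (2*w)) :=
              ((coprime_PR w).mul_right hc2).of_isCoprime_of_dvd_left ⟨3, by rw [hp1]; ring⟩
            have hRRpos : (0:ℤ) ≤ pellR w * pellR (2*w) :=
              (mul_pos (pellR_pos w) (pellR_pos (2*w))).le
            obtain ⟨q, hq⟩ := sq_of_coprime' hcp.symm (by rw [mul_comm]; exact heq2) hRRpos
            obtain ⟨e, he⟩ := sq_of_coprime' hc3 hq (pellR_pos w).le
            have hqq : e^4 = 2*pellP w^2 + 1 := by
              have h5 : (e^2)^2 = pellR w^2 := by rw [he]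
              have h6 : e^4 = (e^2)^2 := by ring
              rw [Even.neg_one_pow hwe] at hnw
              linarith
            have := pellP_eq_zero (quartic1 hqq)
            omega
          · -- 3 ∣ R w ; get R 2w = square, contradiction via quartic1
            obtain ⟨r₁, hr1⟩ := (three_dvd_R w).mpr hw4
            have heq2 : pellR (2*w) * (pellP w * r₁) = a₁^2 := by
              rw [hr1] at hprod3
              have h9 : 3*(pellR (2*w) * (pellP w * r₁)) = 3*a₁^2 := by
                linear_combination hprod3
              omega
            have hcp : IsCoprime (pellR (2*w)) (pellP w * r₁) :=
              (hc2.symm).mul_right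
                ((hc3.symm).of_isCoprime_of_dvd_right ⟨3, by rw [hr1]; ring⟩)
            obtain ⟨f, hf⟩ := sq_of_coprime' hcp heq2 (pellR_pos (2*w)).le
            have hn2w := pell_norm (2*w)
            rw [Even.neg_one_pow (by exact ⟨w, by omega⟩ : Even (2*w))] at hn2w
            have hqq : f^4 = 2*pellP (2*w)^2 + 1 := by
              have h5 : (f^2)^2 = pellR (2*w)^2 := by rw [hf]
              have h6 : f^4 = (f^2)^2 := by ring
              linarith
            have hz := pellP_eq_zero (quartic1 hqq)
            omega
        · -- w odd : the solution w = 1, s = 2, n = 6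
          obtain ⟨g₁, hg1⟩ := (three_dvd_R (2*w)).mpr (by obtain ⟨r, rfl⟩ := hwo; omega)
          have heq2 : pellR w * (pellP w * g₁) = a₁^2 := by
            rw [hg1] at hprod3
            have h9 : 3*(pellR w * (pellP w * g₁)) = 3*a₁^2 := by
              linear_combination hprod3
            omega
          have hcp : IsCoprime (pellR w) (pellP w * g₁) :=
            ((coprime_PR w).symm).mul_right
              (hc3.of_isCoprime_of_dvd_right ⟨3, by rw [hg1]; ring⟩)
          obtain ⟨e, he⟩ := sq_of_coprime' hcp heq2 (pellR_pos w).le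
          have hqq : e^4 + 1 = 2*pellP w^2 := by
            have h5 : (e^2)^2 = pellR w^2 := by rw [he]
            have h6 : e^4 = (e^2)^2 := by ring
            rw [Odd.neg_one_pow hwo] at hnw
            linarith
          have he1 := quartic2 hqq
          have hRw1 : pellR w = 1 := by rw [he, he1]
          have hwle := pellR_eq_one hRw1
          right
          rw [show 2*(s+1) = 6 by omega]
          exact pellP_six
    · -- s odd: pellR (s+2) * pellP s = m²
      exfalso
      have hsign : (-1:ℤ)^s = -1 := Odd.neg_one_pow hso
      rw [hsign] at hJ
      have hkey : pellR (s+2) * pellP s = m^2 := by omega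
      have h3P : ¬ (3:ℤ) ∣ pellP s := by
        rw [three_dvd_P s]
        obtain ⟨r, rfl⟩ := hso; omega
      have hrel : pellR (s+2) = 3*pellP (s+1) + pellP s := by
        have e1 : pellP (s+2+1) = 2*pellP (s+2) + pellP (s+1) := rfl
        have e2 : pellP (s+2) = 2*pellP (s+1) + pellP s := rfl
        have e3 := pellR_eq (s+2)
        omega
      have hcop : IsCoprime (pellR (s+2)) (pellP s) := by
        rw [hrel, show 3*pellP (s+1) + pellP s = 3*pellP (s+1) + pellP s * 1 by ring]
        exact (((isCoprime_three h3P).mul_left (coprime_consec s))).add_mul_left_left 1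
      obtain ⟨a, ha⟩ := sq_of_coprime' hcop hkey (le_of_lt (pellR_pos (s+2)))
      have hnorm := pell_norm (s+2)
      have hsgn2 : ((-1:ℤ))^(s+2) = -1 := by
        rw [pow_add]
        have : ((-1:ℤ))^2 = 1 := by norm_num
        rw [this, hsign]; ring
      rw [hsgn2] at hnorm
      have hq : a^4 + 1 = 2 * pellP (s+2)^2 := by
        have h5 : (a^2)^2 = pellR (s+2)^2 := by rw [ha]
        have h6 : a^4 = (a^2)^2 := by ring
        linarith
      have he1 := quartic2 hq
      have hR1 : pellR (s+2) = 1 := by rw [ha, he1]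
      have := pellR_eq_one hR1
      omega
  · intro h
    simp only [Set.mem_insert_iff, Set.mem_singleton_iff] at h
    rcases h with h | h
    · exact ⟨1, by rw [h]; norm_num⟩
    · exact ⟨6, by rw [h]; norm_num⟩
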